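/- Let S^R be the maximally permissive supervisor for the attacked closed-loop system G^R that is safe with respect to the resilient specification Ha and nonblocking. Then S^R is resilient with respect to Σ_{c,v} and G_robust if and only if for every detection state x_d ∈ X_det the post-attack state (A, x_d) belongs to the state set of S^R. -/

import Mathlib

/-!
Common formalization of supervisory control of DES under actuator-enablement
attacks, following the natural-language context.

* A plant is a DFA with partial transition function `f : X → E → Option X`
  and initial state `x0`; `runFrom` extends `f` to strings; `Lang f x0` is the
  generated language.
* A strict subautomaton of an automaton is represented by its state set
  `Q : Set X`, with induced transition function `subStep f Q`.
* Attacked events are modelled by the alphabet `E ⊕ E`: `Sum.inl e` is the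
  ordinary event `e`, `Sum.inr e` is the attacked copy `eᵃ` (meaningful for
  `e ∈ Scv`).
* The attacked plant `gaStep`, attacked supervisor `saStep` (state `none`
  playing the role of the fresh state `A`), and their synchronous composition
  `grStep` (the attacked closed-loop system `G^R = Sa ∥ Ga`) are defined below,
  together with detection states, robust-recovery, the resilient specification
  `Ha`, supervisors for `G^R`, and resilience.
-/

open Classical List

namespace RobustRec

variable {X : Type*} {E : Type*}

/-- Extension of a partial transition function to strings. -/
def runFrom (f : X → E → Option X) : X → List E → Option X
  | x, [] => some x
  | x, e :: w => (f x e).bind fun y => runFrom f y w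

/-- Language generated from state `x0`. -/
def Lang (f : X → E → Option X) (x0 : X) : Set (List E) :=
  {w | (runFrom f x0 w).isSome}

/-- Transition function of the strict (induced) subautomaton with state set `Q`:
a transition is defined iff it is defined in the big automaton and both its
endpoints lie in `Q`. -/
noncomputable def subStep (f : X → E → Option X) (Q : Set X) : X → E → Option X :=
  fun x e => (f x e).bind fun y => if x ∈ Q ∧ y ∈ Q then some y else none

/-- Vulnerable states: those where some vulnerable controllable event is feasible. -/
def vulnStates (f : X → E → Option X) (Scv : Set E) : Set X :=
  {x | ∃ e ∈ Scv, (f x e).isSome}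

/-- A supervisor for the plant `(f, x0)`, represented by its state set `XS`
(the induced strict subautomaton): it contains `x0`, is controllable w.r.t.
the uncontrollable events `Suc`, and is safe w.r.t. the unsafe states `XUS`. -/
structure IsSupervisor (f : X → E → Option X) (x0 : X) (Suc : Set E)
    (XUS : Set X) (XS : Set X) : Prop where
  init_mem : x0 ∈ XS
  controllable : ∀ x ∈ XS, ∀ e ∈ Suc, ∀ y, f x e = some y → y ∈ XS
  safe : ∀ x ∈ XS, x ∉ XUS

/-- The attacked plant `Ga`: all transitions of `G`, plus, for every transition
on a vulnerable event `σ ∈ Scv`, a parallel transition on its attacked copy. -/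
noncomputable def gaStep (f : X → E → Option X) (Scv : Set E) :
    X → E ⊕ E → Option X
  | x, Sum.inl e => f x e
  | x, Sum.inr e => if e ∈ Scv then f x e else none

/-- The attacked supervisor `Sa`: states are `some x` for states `x` of `S`
plus the fresh state `A = none` with a self-loop on every event; for every
state `x` of `S` and `σ ∈ Scv` with `f_S(x,σ)` undefined there is a transition
on `σᵃ` from `x` to `A`. -/
noncomputable def saStep (f : X → E → Option X) (XS : Set X) (Scv : Set E) :
    Option X → E ⊕ E → Option (Option X)
  | none, _ => some none
  | some x, Sum.inl e => (subStep f XS x e).map some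
  | some x, Sum.inr e =>
      if e ∈ Scv ∧ x ∈ XS ∧ subStep f XS x e = none then some none else none

/-- Synchronous composition of two automata over a common alphabet. -/
def prodStep {X1 X2 A : Type*} (f1 : X1 → A → Option X1) (f2 : X2 → A → Option X2) :
    X1 × X2 → A → Option (X1 × X2) :=
  fun p a => (f1 p.1 a).bind fun y1 => (f2 p.2 a).map fun y2 => (y1, y2)

/-- The attacked closed-loop system `G^R = Sa ∥ Ga`. Its post-attack states are
those of the form `(none, x)`, i.e. `(A, x)`. -/
noncomputable def grStep (f : X → E → Option X) (XS : Set X) (Scv : Set E) :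
    Option X × X → E ⊕ E → Option (Option X × X) :=
  prodStep (saStep f XS Scv) (gaStep f Scv)

/-- Initial state of `G^R`. -/
def grInit (x0 : X) : Option X × X := (some x0, x0)

/-- Embedding of strings over `Σ` into strings over `Σ ∪ Σᵃ_{c,v}`. -/
def embed : List E → List (E ⊕ E) := List.map Sum.inl

/-- The language `L(Sa/Ga)` of the attacked closed-loop system. -/
noncomputable def GRLang (f : X → E → Option X) (x0 : X) (XS : Set X) (Scv : Set E) :
    Set (List (E ⊕ E)) :=
  Lang (grStep f XS Scv) (grInit x0)

/-- The detection language `L_det = {sσ ∈ L(G) | s ∈ L(S/G), σ ∈ Σ_{c,v},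
sσᵃ ∈ L(Sa/Ga)}`. -/
noncomputable def detLang (f : X → E → Option X) (x0 : X) (XS : Set X) (Scv : Set E) :
    Set (List E) :=
  {w | ∃ s σ, w = s ++ [σ] ∧ σ ∈ Scv ∧ w ∈ Lang f x0 ∧
        s ∈ Lang (subStep f XS) x0 ∧ embed s ++ [Sum.inr σ] ∈ GRLang f x0 XS Scv}

/-- The detection states `X_det = {f(x0, sσ) : sσ ∈ L_det}`. -/
noncomputable def detStates (f : X → E → Option X) (x0 : X) (XS : Set X) (Scv : Set E) :
    Set X :=
  {x | ∃ w ∈ detLang f x0 XS Scv, runFrom f x0 w = some x}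

/-- `r` is a robust-recovery strategy from `x` relative to the candidate set `R`
of recoverable states, the robust region `XR` and the bad states
`Bad = X_v ∪ X_US`: (1) `r` leads into `XR`; (2) no prefix of `r` visits `Bad`;
(3) no prefix of `r` can uncontrollably reach `Bad`; (4) any one-step
uncontrollable deviation from `r` lands in `R`. -/
def IsRecoveryPath (f : X → E → Option X) (Suc : Set E) (XR Bad : Set X)
    (R : Set X) (x : X) (r : List E) : Prop :=
  (∃ y ∈ XR, runFrom f x r = some y) ∧
  (∀ t, t <+: r → ∀ y, runFrom f x t = some y → y ∉ Bad) ∧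
  (∀ t, t <+: r → ∀ u : List E, (∀ e ∈ u, e ∈ Suc) →
      ∀ y, runFrom f x (t ++ u) = some y → y ∉ Bad) ∧
  (∀ t, t <+: r → ∀ e ∈ Suc, ∀ y, runFrom f x (t ++ [e]) = some y →
      ¬ (t ++ [e]) <+: r → y ∈ R)

/-- The set `R` of AE-robust recoverable states: the largest subset of
`X \ Bad` each of whose elements admits a robust-recovery strategy (relative
to the set itself). -/
def recSet (f : X → E → Option X) (Suc : Set E) (XR Bad : Set X) : Set X :=
  ⋃₀ {R | R ⊆ Badᶜ ∧ ∀ x ∈ R, ∃ r, IsRecoveryPath f Suc XR Bad R x r}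

/-- The attacked system `Sa/Ga` is AE-robust recoverable w.r.t. the robust
region `XR` if every detection state is AE-robust recoverable. -/
noncomputable def AERobustRecoverable (f : X → E → Option X) (x0 : X)
    (Suc Scv : Set E) (XUS XS XR : Set X) : Prop :=
  detStates f x0 XS Scv ⊆ recSet f Suc XR (vulnStates f Scv ∪ XUS)

/-- Reachable states of `G^R` (the state set of the synchronous composition). -/
noncomputable def grStates (f : X → E → Option X) (x0 : X) (XS : Set X) (Scv : Set E) :
    Set (Option X × X) :=
  {p | ∃ w, runFrom (grStep f XS Scv) (grInit x0) w = some p}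

/-- A supervisor for `G^R`, represented by its state set `Q` (inducing a strict
subautomaton of `G^R`): it contains the initial state and is controllable
w.r.t. `Suc` (attacked events being controllable). -/
structure IsGRSupervisor (f : X → E → Option X) (x0 : X) (Suc Scv : Set E)
    (XS : Set X) (Q : Set (Option X × X)) : Prop where
  subset : Q ⊆ grStates f x0 XS Scv
  init_mem : grInit x0 ∈ Q
  controllable : ∀ p ∈ Q, ∀ e ∈ Suc, ∀ q, grStep f XS Scv p (Sum.inl e) = some q → q ∈ Q

/-- State set of the resilient specification `Ha`: `G^R` minus every post-attack
state `(A, x)` with `x ∈ X_v ∪ X_US`. -/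
def haCarrier (f : X → E → Option X) (Scv : Set E) (XUS : Set X) :
    Set (Option X × X) :=
  {p | ¬ (p.1 = none ∧ p.2 ∈ vulnStates f Scv ∪ XUS)}

/-- Marked states of `Ha`: post-attack states `(A, x)` with `x` in the robust
region. -/
def haMarked (XR : Set X) : Set (Option X × X) :=
  {p | p.1 = (none : Option X) ∧ p.2 ∈ XR}

/-- The closed-loop language `L(S^R/G^R) = L(S^R)` of a supervisor `Q` for `G^R`. -/
noncomputable def SRLang (f : X → E → Option X) (x0 : X) (XS : Set X) (Scv : Set E)
    (Q : Set (Option X × X)) : Set (List (E ⊕ E)) :=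
  Lang (subStep (grStep f XS Scv) Q) (grInit x0)

/-- `S^R` is safe w.r.t. the resilient specification `Ha`: `L(S^R) ⊆ L(Ha)`. -/
noncomputable def SafeWrtHa (f : X → E → Option X) (x0 : X) (XS : Set X)
    (Scv : Set E) (XUS : Set X) (Q : Set (Option X × X)) : Prop :=
  SRLang f x0 XS Scv Q ⊆
    Lang (subStep (grStep f XS Scv) (haCarrier f Scv XUS)) (grInit x0)

/-- `S^R` is nonblocking: from every post-attack state of `S^R`, a marked state
of `Ha` is reachable within `S^R`. -/
noncomputable def NonblockingSR (f : X → E → Option X) (XS : Set X) (Scv : Set E)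
    (XR : Set X) (Q : Set (Option X × X)) : Prop :=
  ∀ p ∈ Q, p.1 = (none : Option X) →
    ∃ w q, runFrom (subStep (grStep f XS Scv) Q) p w = some q ∧ q ∈ haMarked XR

/-- `S^R` is maximally permissive among safe nonblocking supervisors for `G^R`. -/
noncomputable def MaxPermissive (f : X → E → Option X) (x0 : X) (Suc Scv : Set E)
    (XS XUS XR : Set X) (Q : Set (Option X × X)) : Prop :=
  ∀ Q', IsGRSupervisor f x0 Suc Scv XS Q' → SafeWrtHa f x0 XS Scv XUS Q' →
    NonblockingSR f XS Scv XR Q' → SRLang f x0 XS Scv Q' ⊆ SRLang f x0 XS Scv Q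

/-- `S^R` (given by its state set `Q`) is resilient w.r.t. `Scv` and the robust
region `XR`: it permits the full nominal behavior `L(S/G)`, and after any
AE-attack `sσᵃ` feasible in `L(Sa/Ga)` it permits the attack, keeps all its
subsequent behavior out of `Bad = X_v ∪ X_US`, and can always be extended
within `L(S^R)` to reach a post-attack state `(A, x)` with `x ∈ XR`; i.e. it
enforces a robust-recovery strategy from the detection state. -/
noncomputable def ResilientSup (f : X → E → Option X) (x0 : X) (Scv : Set E)
    (XS XR Bad : Set X) (Q : Set (Option X × X)) : Prop :=
  (∀ s ∈ Lang (subStep f XS) x0, embed s ∈ SRLang f x0 XS Scv Q) ∧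
  ∀ s : List E, embed s ∈ SRLang f x0 XS Scv Q →
    ∀ σ ∈ Scv, embed s ++ [Sum.inr σ] ∈ GRLang f x0 XS Scv →
      embed s ++ [Sum.inr σ] ∈ SRLang f x0 XS Scv Q ∧
      ∀ t : List E, embed s ++ [Sum.inr σ] ++ embed t ∈ SRLang f x0 XS Scv Q →
        (∀ t', t' <+: t → ∀ y, runFrom f x0 (s ++ σ :: t') = some y →
            y ∉ Bad) ∧
        ∃ u q, runFrom (subStep (grStep f XS Scv) Q) (grInit x0)
                 (embed s ++ [Sum.inr σ] ++ embed t ++ u) = some q ∧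
               q.1 = (none : Option X) ∧ q.2 ∈ XR

/-- A prefix-closed language. -/
def PrefixClosed (K : Set (List E)) : Prop := ∀ s t : List E, s ++ t ∈ K → s ∈ K

/-- `K` is controllable w.r.t. the language `M` and uncontrollable events `Suc`. -/
def ControllableLang (K M : Set (List E)) (Suc : Set E) : Prop :=
  ∀ s ∈ K, ∀ e ∈ Suc, s ++ [e] ∈ M → s ++ [e] ∈ K

/-- The supremal controllable (prefix-closed) sublanguage of `M` w.r.t. `LG`. -/
def supC (M LG : Set (List E)) (Suc : Set E) : Set (List E) :=
  ⋃₀ {K | K ⊆ M ∧ PrefixClosed K ∧ ControllableLang K LG Suc}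

end RobustRec

namespace RobustRec

section Aux

variable {X : Type*} {E : Type*}

theorem runFrom_append (f : X → E → Option X) (x : X) (a b : List E) :
    runFrom f x (a ++ b) = (runFrom f x a).bind fun y => runFrom f y b := by
  induction a generalizing x with
  | nil => simp [runFrom]
  | cons e a ih =>
      simp only [List.cons_append, runFrom]
      cases f x e <;> simp [ih]

theorem runFrom_append_some {f : X → E → Option X} {x y : X} {a b : List E}
    (h : runFrom f x (a ++ b) = some y) :
    ∃ z, runFrom f x a = some z ∧ runFrom f z b = some y := by
  rw [runFrom_append] at h
  exact Option.bind_eq_some_iff.mp h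

theorem subStep_eq_some {f : X → E → Option X} {Q : Set X} {x y : X} {e : E} :
    subStep f Q x e = some y ↔ f x e = some y ∧ x ∈ Q ∧ y ∈ Q := by
  constructor
  · intro h
    simp only [subStep, Option.bind_eq_some_iff] at h
    obtain ⟨z, hz, h⟩ := h
    split_ifs at h with hc
    · obtain rfl : z = y := Option.some.inj h
      exact ⟨hz, hc⟩
  · rintro ⟨h1, h2⟩
    simp [subStep, h1, h2.1, h2.2]

theorem runFrom_subStep_le {f : X → E → Option X} {Q : Set X} {x y : X} {w : List E}
    (h : runFrom (subStep f Q) x w = some y) : runFrom f x w = some y := by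
  induction w generalizing x with
  | nil => exact h
  | cons e w ih =>
      simp only [runFrom, Option.bind_eq_some_iff] at h ⊢
      obtain ⟨z, hz, h⟩ := h
      exact ⟨z, (subStep_eq_some.mp hz).1, ih h⟩

theorem runFrom_subStep_mem {f : X → E → Option X} {Q : Set X} {x y : X} {w : List E}
    (h : runFrom (subStep f Q) x w = some y) : y ∈ Q ∨ y = x := by
  induction w generalizing x with
  | nil => exact Or.inr (Option.some.inj h).symm
  | cons e w ih =>
      simp only [runFrom, Option.bind_eq_some_iff] at h
      obtain ⟨z, hz, h⟩ := h
      rcases ih h with h' | rfl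
      · exact Or.inl h'
      · exact Or.inl (subStep_eq_some.mp hz).2.2

theorem runFrom_subStep_mono {f : X → E → Option X} {Q1 Q2 : Set X} (hsub : Q1 ⊆ Q2)
    {x y : X} {w : List E} (hx : x ∈ Q2)
    (h : runFrom (subStep f Q1) x w = some y) :
    runFrom (subStep f Q2) x w = some y := by
  induction w generalizing x with
  | nil => exact h
  | cons e w ih =>
      simp only [runFrom, Option.bind_eq_some_iff] at h ⊢
      obtain ⟨z, hz, h⟩ := h
      obtain ⟨hf, _, hzQ⟩ := subStep_eq_some.mp hz
      exact ⟨z, subStep_eq_some.mpr ⟨hf, hx, hsub hzQ⟩, ih (hsub hzQ) h⟩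

variable (f : X → E → Option X) (XS : Set X) (Scv : Set E)

theorem grStep_some_inl (x : X) (e : E) :
    grStep f XS Scv (some x, x) (Sum.inl e) =
      (subStep f XS x e).map (fun z => (some z, z)) := by
  rcases hz : subStep f XS x e with _ | z
  · simp [grStep, prodStep, saStep, hz]
  · have hf : f x e = some z := (subStep_eq_some.mp hz).1
    simp [grStep, prodStep, saStep, gaStep, hz, hf]

theorem grStep_none_inl (x : X) (e : E) :
    grStep f XS Scv ((none : Option X), x) (Sum.inl e) =
      (f x e).map (fun z => (none, z)) := by
  simp [grStep, prodStep, saStep, gaStep]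

theorem grStep_some_inr (x : X) (σ : E) :
    grStep f XS Scv (some x, x) (Sum.inr σ) =
      if σ ∈ Scv ∧ x ∈ XS ∧ subStep f XS x σ = none then
        (f x σ).map (fun z => ((none : Option X), z))
      else none := by
  by_cases hc : σ ∈ Scv ∧ x ∈ XS ∧ subStep f XS x σ = none
  · simp [grStep, prodStep, saStep, gaStep, hc, hc.1]
  · simp [grStep, prodStep, saStep, gaStep, hc]

theorem gr_run_embed {x y : X} {s : List E}
    (h : runFrom (subStep f XS) x s = some y) :
    runFrom (grStep f XS Scv) (some x, x) (embed s) = some (some y, y) := by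
  induction s generalizing x with
  | nil =>
      obtain rfl := Option.some.inj h
      simp [embed, runFrom]
  | cons e s ih =>
      simp only [runFrom, Option.bind_eq_some_iff] at h
      obtain ⟨z, hz, h⟩ := h
      simp only [embed, List.map_cons, runFrom]
      rw [grStep_some_inl, hz]
      simpa [embed] using ih h

theorem gr_run_embed_structure {x : X} {s : List E} {p : Option X × X}
    (h : runFrom (grStep f XS Scv) (some x, x) (embed s) = some p) :
    ∃ y, p = (some y, y) ∧ runFrom (subStep f XS) x s = some y := by
  induction s generalizing x with
  | nil =>
      simp only [embed, List.map_nil, runFrom] at h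
      exact ⟨x, (Option.some.inj h).symm, rfl⟩
  | cons e s ih =>
      simp only [embed, List.map_cons, runFrom, Option.bind_eq_some_iff] at h
      obtain ⟨q, hq, h⟩ := h
      rw [grStep_some_inl] at hq
      obtain ⟨z, hz, rfl⟩ := Option.map_eq_some_iff.mp hq
      obtain ⟨y, rfl, hrun⟩ := ih h
      exact ⟨y, rfl, by simp [runFrom, hz, hrun]⟩

theorem gr_run_post {x : X} {s : List E} {p : Option X × X}
    (h : runFrom (grStep f XS Scv) ((none : Option X), x) (embed s) = some p) :
    ∃ y, p = ((none : Option X), y) ∧ runFrom f x s = some y := by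
  induction s generalizing x with
  | nil =>
      simp only [embed, List.map_nil, runFrom] at h
      exact ⟨x, (Option.some.inj h).symm, rfl⟩
  | cons e s ih =>
      simp only [embed, List.map_cons, runFrom, Option.bind_eq_some_iff] at h
      obtain ⟨q, hq, h⟩ := h
      rw [grStep_none_inl] at hq
      obtain ⟨z, hz, rfl⟩ := Option.map_eq_some_iff.mp hq
      obtain ⟨y, rfl, hrun⟩ := ih h
      exact ⟨y, rfl, by simp [runFrom, hz, hrun]⟩

/-- The "nominal" candidate supervisor for `G^R`: all states `(some y, y)`
with `y` reachable under the nominal supervisor `S`. -/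
def nominalQ (x0 : X) : Set (Option X × X) :=
  {p | ∃ y, p = (some y, y) ∧ ∃ s : List E, runFrom (subStep f XS) x0 s = some y}

theorem nominal_run {x0 x y : X} {s : List E}
    (hx : ∃ s0 : List E, runFrom (subStep f XS) x0 s0 = some x)
    (h : runFrom (subStep f XS) x s = some y) :
    runFrom (subStep (grStep f XS Scv) (nominalQ f XS x0)) (some x, x) (embed s)
      = some (some y, y) := by
  induction s generalizing x with
  | nil =>
      obtain rfl := Option.some.inj h
      simp [embed, runFrom]
  | cons e s ih =>
      simp only [runFrom, Option.bind_eq_some_iff] at h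
      obtain ⟨z, hz, h⟩ := h
      obtain ⟨s0, hs0⟩ := hx
      have hz' : runFrom (subStep f XS) x0 (s0 ++ [e]) = some z := by
        rw [runFrom_append, hs0]
        simp [runFrom, hz]
      have hstep : subStep (grStep f XS Scv) (nominalQ f XS x0) (some x, x) (Sum.inl e)
          = some (some z, z) :=
        subStep_eq_some.mpr ⟨by rw [grStep_some_inl, hz]; rfl,
          ⟨x, rfl, s0, hs0⟩, ⟨z, rfl, s0 ++ [e], hz'⟩⟩
      simp only [embed, List.map_cons, runFrom, hstep, Option.bind_some]
      simpa [embed] using ih ⟨s0 ++ [e], hz'⟩ h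

end Aux

end RobustRec

/-- Theorem 1 of the paper. Let `S^R` (state set `Q`) be the
maximally permissive supervisor for the attacked closed-loop system `G^R` that
is safe w.r.t. the resilient specification `Ha` and nonblocking. Then `S^R` is
resilient w.r.t. `Σ_{c,v}` and `G_robust` iff for every detection state
`x_d ∈ X_det` the post-attack state `(A, x_d)` belongs to the state set of `S^R`. -/
theorem RobustRec.resilient_iff_detStates_mem
    {X E : Type*} [Fintype X] [Fintype E]
    (f : X → E → Option X) (x0 : X) (Sc Suc Scv : Set E) (XUS XS XR : Set X)
    (hdisj : Sc ∩ Suc = ∅) (hcover : Sc ∪ Suc = Set.univ) (hScv : Scv ⊆ Sc)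
    (hS : IsSupervisor f x0 Suc XUS XS)
    (hXR : XR ∩ (vulnStates f Scv ∪ XUS) = ∅)
    (Q : Set (Option X × X))
    (hQ : IsGRSupervisor f x0 Suc Scv XS Q)
    (hsafe : SafeWrtHa f x0 XS Scv XUS Q)
    (hnb : NonblockingSR f XS Scv XR Q)
    (hmax : MaxPermissive f x0 Suc Scv XS XUS XR Q) :
    ResilientSup f x0 Scv XS XR (vulnStates f Scv ∪ XUS) Q ↔
      ∀ x ∈ detStates f x0 XS Scv, ((none : Option X), x) ∈ Q := by
  constructor
  · -- resilient → detection states recoverable in Q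
    intro hres x hx
    obtain ⟨w, ⟨s, σ, rfl, hσ, hwL, hsL, hga⟩, hrun⟩ := hx
    have h1 : embed s ∈ SRLang f x0 XS Scv Q := hres.1 s hsL
    have h2 := (hres.2 s h1 σ hσ hga).1
    obtain ⟨p, hp⟩ := Option.isSome_iff_exists.mp h2
    obtain ⟨p1, hp1, hstep⟩ := runFrom_append_some hp
    obtain ⟨y, rfl, hy⟩ := gr_run_embed_structure f XS Scv (runFrom_subStep_le hp1)
    have hstep' : subStep (grStep f XS Scv) Q (some y, y) (Sum.inr σ) = some p := by
      simp only [runFrom, Option.bind_eq_some_iff] at hstep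
      obtain ⟨p', hp', h⟩ := hstep
      obtain rfl := Option.some.inj h
      exact hp'
    obtain ⟨hgr, hmem1, hmem2⟩ := subStep_eq_some.mp hstep'
    rw [grStep_some_inr] at hgr
    by_cases hc : σ ∈ Scv ∧ y ∈ XS ∧ subStep f XS y σ = none
    swap
    · rw [if_neg hc] at hgr; exact absurd hgr (by simp)
    rw [if_pos hc] at hgr
    obtain ⟨xd, hxd, rfl⟩ := Option.map_eq_some_iff.mp hgr
    have hys : runFrom f x0 s = some y := runFrom_subStep_le hy
    rw [runFrom_append, hys, Option.bind_some] at hrun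
    simp only [runFrom, hxd, Option.bind_some] at hrun
    obtain rfl := Option.some.inj hrun
    exact hmem2
  · -- detection states in Q → resilient
    intro hdet
    constructor
    · -- nominal behavior is permitted
      intro s hs
      obtain ⟨y, hy⟩ := Option.isSome_iff_exists.mp hs
      have hQ'sup : IsGRSupervisor f x0 Suc Scv XS (nominalQ f XS x0) := by
        refine ⟨?_, ?_, ?_⟩
        · rintro p ⟨z, rfl, s0, hs0⟩
          exact ⟨embed s0, gr_run_embed f XS Scv hs0⟩
        · exact ⟨x0, rfl, [], rfl⟩
        · rintro p ⟨z, rfl, s0, hs0⟩ e he q hq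
          rw [grStep_some_inl] at hq
          obtain ⟨z2, hz2, rfl⟩ := Option.map_eq_some_iff.mp hq
          refine ⟨z2, rfl, s0 ++ [e], ?_⟩
          rw [runFrom_append, hs0, Option.bind_some]
          simp [runFrom, hz2]
      have hQ'safe : SafeWrtHa f x0 XS Scv XUS (nominalQ f XS x0) := by
        intro w hw
        obtain ⟨p, hp⟩ := Option.isSome_iff_exists.mp hw
        have hmono : runFrom (subStep (grStep f XS Scv) (haCarrier f Scv XUS))
            (grInit x0) w = some p := by
          refine runFrom_subStep_mono ?_ ?_ hp
          · rintro q ⟨z, rfl, _⟩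
            simp [haCarrier]
          · simp [haCarrier, grInit]
        exact Option.isSome_iff_exists.mpr ⟨p, hmono⟩
      have hQ'nb : NonblockingSR f XS Scv XR (nominalQ f XS x0) := by
        rintro p ⟨z, rfl, _⟩ hnone
        simp at hnone
      apply hmax _ hQ'sup hQ'safe hQ'nb
      exact Option.isSome_iff_exists.mpr ⟨_, nominal_run f XS Scv ⟨[], rfl⟩ hy⟩
    · -- enforced robust recovery after attacks
      intro s hsR σ hσ hga
      obtain ⟨p1, hp1⟩ := Option.isSome_iff_exists.mp hsR
      obtain ⟨y, rfl, hy⟩ := gr_run_embed_structure f XS Scv (runFrom_subStep_le hp1)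
      have hp1Q : ((some y : Option X), y) ∈ Q := by
        rcases runFrom_subStep_mem hp1 with h | h
        · exact h
        · rw [h]; exact hQ.init_mem
      obtain ⟨r, hr⟩ := Option.isSome_iff_exists.mp hga
      obtain ⟨p1', hp1', hstep⟩ := runFrom_append_some hr
      obtain ⟨y', hy'eq, hy'⟩ := gr_run_embed_structure f XS Scv hp1'
      obtain rfl : y = y' := Option.some.inj (hy.symm.trans hy')
      subst hy'eq
      have hstep' : grStep f XS Scv (some y, y) (Sum.inr σ) = some r := by
        simp only [runFrom, Option.bind_eq_some_iff] at hstep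
        obtain ⟨r', hr', h⟩ := hstep
        obtain rfl := Option.some.inj h
        exact hr'
      rw [grStep_some_inr] at hstep'
      by_cases hc : σ ∈ Scv ∧ y ∈ XS ∧ subStep f XS y σ = none
      swap
      · rw [if_neg hc] at hstep'; exact absurd hstep' (by simp)
      rw [if_pos hc] at hstep'
      obtain ⟨xd, hxd, rfl⟩ := Option.map_eq_some_iff.mp hstep'
      have hys : runFrom f x0 s = some y := runFrom_subStep_le hy
      have hrunxd : runFrom f x0 (s ++ [σ]) = some xd := by
        rw [runFrom_append, hys, Option.bind_some]
        simp [runFrom, hxd]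
      have hxddet : xd ∈ detStates f x0 XS Scv :=
        ⟨s ++ [σ], ⟨s, σ, rfl, hσ, Option.isSome_iff_exists.mpr ⟨xd, hrunxd⟩,
          Option.isSome_iff_exists.mpr ⟨y, hy⟩, hga⟩, hrunxd⟩
      have hQd : ((none : Option X), xd) ∈ Q := hdet xd hxddet
      have hstepQ : subStep (grStep f XS Scv) Q (some y, y) (Sum.inr σ)
          = some ((none : Option X), xd) :=
        subStep_eq_some.mpr ⟨by rw [grStep_some_inr, if_pos hc, hxd]; rfl, hp1Q, hQd⟩
      have hA : runFrom (subStep (grStep f XS Scv) Q) (grInit x0)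
          (embed s ++ [Sum.inr σ]) = some ((none : Option X), xd) := by
        rw [runFrom_append, hp1, Option.bind_some]
        simp [runFrom, hstepQ]
      refine ⟨Option.isSome_iff_exists.mpr ⟨_, hA⟩, ?_⟩
      intro t ht
      obtain ⟨p, hp⟩ := Option.isSome_iff_exists.mp ht
      rw [runFrom_append, hA, Option.bind_some] at hp
      obtain ⟨z, hzeq, hz⟩ := gr_run_post f XS Scv (runFrom_subStep_le hp)
      subst hzeq
      have hpQ : ((none : Option X), z) ∈ Q := by
        rcases runFrom_subStep_mem hp with h | h
        · exact h
        · rw [h]; exact hQd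
      constructor
      · -- all nominal continuations avoid the bad states
        intro t' ht' y2 hy2
        obtain ⟨t2, rfl⟩ := ht'
        have hembsplit : embed (t' ++ t2) = embed t' ++ embed t2 := by
          simp [embed]
        rw [hembsplit] at hp
        obtain ⟨m, hm, _⟩ := runFrom_append_some hp
        obtain ⟨z', hmeq, hz'⟩ := gr_run_post f XS Scv (runFrom_subStep_le hm)
        subst hmeq
        have hy2' : z' = y2 := by
          rw [List.append_cons, runFrom_append, hrunxd, Option.bind_some, hz'] at hy2
          exact Option.some.inj hy2
        subst hy2'
        have hstr : (embed s ++ [Sum.inr σ]) ++ embed t' ∈ SRLang f x0 XS Scv Q := by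
          refine Option.isSome_iff_exists.mpr ⟨((none : Option X), z'), ?_⟩
          rw [runFrom_append, hA, Option.bind_some]
          exact hm
        obtain ⟨m2, hm2⟩ := Option.isSome_iff_exists.mp (hsafe hstr)
        have hm2eq : m2 = ((none : Option X), z') := by
          have h1 := runFrom_subStep_le hm2
          have h2 : runFrom (grStep f XS Scv) (grInit x0)
              ((embed s ++ [Sum.inr σ]) ++ embed t') = some ((none : Option X), z') := by
            rw [runFrom_append, runFrom_subStep_le hA, Option.bind_some]
            exact runFrom_subStep_le hm
          exact Option.some.inj (h1.symm.trans h2)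
        have hm2HC : m2 ∈ haCarrier f Scv XUS := by
          rcases runFrom_subStep_mem hm2 with h | h
          · exact h
          · rw [h]; simp [haCarrier, grInit]
        rw [hm2eq] at hm2HC
        simp only [haCarrier, Set.mem_setOf_eq] at hm2HC
        exact fun hbad => hm2HC ⟨by simp, hbad⟩
      · -- extension to a marked (robust) post-attack state
        obtain ⟨u, q, hq, hqm⟩ := hnb _ hpQ rfl
        refine ⟨u, q, ?_, hqm.1, hqm.2⟩
        have hfull : runFrom (subStep (grStep f XS Scv) Q) (grInit x0)
            ((embed s ++ [Sum.inr σ]) ++ embed t) = some ((none : Option X), z) := by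
          rw [runFrom_append, hA, Option.bind_some]
          exact hp
        rw [runFrom_append, hfull, Option.bind_some]
        exact hq
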